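/- Suppose each gradient ∇g_i is Lipschitz continuous on ℝ^n with constant L and let ω > L/2. Let {x^k} ⊂ ℝ^n be defined by x^{k+1} = x^k + d^k with d^k := d_ω(x^k). If {F_i(x^k)}_k is bounded from below for every i = 1,…,m, then ∑_{k=0}^∞ ‖d^k‖² < ∞ and in particular lim_{k→∞} ‖d^k‖² = 0. -/

import Mathlib

open Filter Topology
open scoped RealInnerProductSpace

noncomputable section

/-- `Euc n` is Euclidean `n`-space `ℝ^n`. -/
abbrev Euc (n : ℕ) := EuclideanSpace ℝ (Fin n)

/-- `HasDirDeriv f x d D` : the one-sided directional derivative of `f` at `x`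
in direction `d` exists and equals `D`, i.e. `(f (x + α • d) - f x)/α → D` as `α → 0⁺`. -/
def HasDirDeriv {n : ℕ} (f : Euc n → ℝ) (x d : Euc n) (D : ℝ) : Prop :=
  Filter.Tendsto (fun α : ℝ => (f (x + α • d) - f x) / α)
    (nhdsWithin 0 (Set.Ioi 0)) (nhds D)

/-- `x` is Pareto stationary for the objectives `F i`:
for every direction `d`, `max_i F_i'(x; d) ≥ 0`, i.e. some objective has
nonnegative directional derivative in direction `d`. -/
def ParetoStationary {n m : ℕ} (F : Fin m → Euc n → ℝ) (x : Euc n) : Prop :=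
  ∀ d : Euc n, ∃ i : Fin m, ∃ D : ℝ, HasDirDeriv (F i) x d D ∧ 0 ≤ D

/-- `θ_x(d) = max_i { ⟪∇g_i(x), d⟫ + ½⟪d, B_i(x) d⟫ + h_i(x+d) - h_i(x) }`. -/
def theta {n m : ℕ} (g h : Fin m → Euc n → ℝ)
    (B : Fin m → Euc n → (Euc n →L[ℝ] Euc n)) (x d : Euc n) : ℝ :=
  ⨆ i : Fin m, (⟪gradient (g i) x, d⟫ + (1 / 2) * ⟪d, B i x d⟫ + h i (x + d) - h i x)

/-- `φ_{ω,x}(d) = θ_x(d) + (ω/2)‖d‖²`. -/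
def phi {n m : ℕ} (g h : Fin m → Euc n → ℝ)
    (B : Fin m → Euc n → (Euc n →L[ℝ] Euc n)) (ω : ℝ) (x d : Euc n) : ℝ :=
  theta g h B x d + (ω / 2) * ‖d‖ ^ 2

section Helpers
open Set
/-- Descent lemma. -/
lemma descent_lemma {n : ℕ} {f : Euc n → ℝ} (hf : ContDiff ℝ 2 f) {L : NNReal}
    (hL : LipschitzWith L (gradient f)) (x d : Euc n) :
    f (x + d) ≤ f x + ⟪gradient f x, d⟫ + ((L : ℝ) / 2) * ‖d‖ ^ 2 := by
  have hdiff : Differentiable ℝ f := hf.differentiable (by norm_num)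
  set A : ℝ := ⟪gradient f x, d⟫ with hA
  set C : ℝ := ((L : ℝ) / 2) * ‖d‖ ^ 2 with hC
  set ψ : ℝ → ℝ := fun t => f (x + t • d) - t * A - C * t ^ 2 with hψ
  have hcurve : ∀ t : ℝ, HasDerivAt (fun t : ℝ => x + t • d) d t := by
    intro t
    simpa using ((hasDerivAt_id t).smul_const d).const_add x
  have hder : ∀ t : ℝ, HasDerivAt ψ (⟪gradient f (x + t • d), d⟫ - A - C * (2 * t)) t := by
    intro t
    have h1 : HasDerivAt (fun t : ℝ => f (x + t • d)) ⟪gradient f (x + t • d), d⟫ t := by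
      have hg := (hdiff (x + t • d)).hasGradientAt
      have hfd := hasGradientAt_iff_hasFDerivAt.mp hg
      have := hfd.comp_hasDerivAt t (hcurve t)
      simpa [InnerProductSpace.toDual_apply_apply, Function.comp_def] using this
    have h2 : HasDerivAt (fun t : ℝ => t * A) A t := hasDerivAt_mul_const A
    have h3 : HasDerivAt (fun t : ℝ => C * t ^ 2) (C * (2 * t)) t := by
      simpa using ((hasDerivAt_pow 2 t).const_mul C)
    exact (h1.sub h2).sub h3
  have hanti : AntitoneOn ψ (Icc (0:ℝ) 1) := by
    apply antitoneOn_of_deriv_nonpos (convex_Icc 0 1)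
    · exact (Differentiable.continuous (fun t => (hder t).differentiableAt)).continuousOn
    · exact fun t _ => (hder t).differentiableAt.differentiableWithinAt
    · intro t ht
      rw [interior_Icc] at ht
      rw [(hder t).deriv]
      have hlip : ‖gradient f (x + t • d) - gradient f x‖ ≤ (L : ℝ) * (t * ‖d‖) := by
        have := hL.norm_sub_le (x + t • d) x
        simpa [norm_smul, abs_of_pos ht.1, mul_assoc] using this
      have hcs : ⟪gradient f (x + t • d) - gradient f x, d⟫ ≤
          ‖gradient f (x + t • d) - gradient f x‖ * ‖d‖ :=
        real_inner_le_norm _ _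
      have h4 : ⟪gradient f (x + t • d), d⟫ - A ≤ (L : ℝ) * (t * ‖d‖) * ‖d‖ := by
        rw [hA]
        have := inner_sub_left (𝕜 := ℝ) (gradient f (x + t • d)) (gradient f x) d
        calc ⟪gradient f (x + t • d), d⟫ - ⟪gradient f x, d⟫
            = ⟪gradient f (x + t • d) - gradient f x, d⟫ := by rw [this]
          _ ≤ ‖gradient f (x + t • d) - gradient f x‖ * ‖d‖ := hcs
          _ ≤ (L : ℝ) * (t * ‖d‖) * ‖d‖ := by
              apply mul_le_mul_of_nonneg_right hlip (norm_nonneg _)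
      have : C * (2 * t) = (L : ℝ) * (t * ‖d‖) * ‖d‖ := by rw [hC]; ring
      linarith
  have h01 := hanti (by simp : (0:ℝ) ∈ Icc (0:ℝ) 1) (by simp : (1:ℝ) ∈ Icc (0:ℝ) 1) zero_le_one
  simp only [hψ, zero_smul, add_zero, one_smul, zero_mul, one_pow] at h01
  have : f (x + d) - A - C ≤ f x := by
    simpa using h01
  linarith

variable {n m : ℕ} (g h : Fin m → Euc n → ℝ) (B : Fin m → Euc n → (Euc n →L[ℝ] Euc n))

lemma term_le_theta [Nonempty (Fin m)] (x d : Euc n) (i : Fin m) :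
    ⟪gradient (g i) x, d⟫ + (1 / 2) * ⟪d, B i x d⟫ + h i (x + d) - h i x ≤ theta g h B x d :=
  le_ciSup (f := fun i : Fin m =>
    ⟪gradient (g i) x, d⟫ + (1 / 2) * ⟪d, B i x d⟫ + h i (x + d) - h i x)
    (Set.Finite.bddAbove (Set.finite_range _)) i

lemma theta_zero [Nonempty (Fin m)] (x : Euc n) : theta g h B x 0 = 0 := by
  simp [theta]

lemma theta_key [Nonempty (Fin m)]
    (hh : ∀ i, ConvexOn ℝ Set.univ (h i))
    (hBpos : ∀ i x (d : Euc n), d ≠ 0 → 0 < ⟪d, B i x d⟫)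
    (ω : ℝ) (hω : 0 < ω) (dω : Euc n → Euc n)
    (hmin : ∀ y d, phi g h B ω y (dω y) ≤ phi g h B ω y d) (x : Euc n) :
    theta g h B x (dω x) ≤ -ω * ‖dω x‖ ^ 2 := by
  set d := dω x with hd
  have hBnn : ∀ i, 0 ≤ ⟪d, B i x d⟫ := by
    intro i
    rcases eq_or_ne d 0 with h0 | h0
    · simp [h0]
    · exact (hBpos i x d h0).le
  -- for t ∈ (0,1): theta x (t•d) ≤ t * theta x d
  have hconv : ∀ t : ℝ, t ∈ Ioo (0:ℝ) 1 → theta g h B x (t • d) ≤ t * theta g h B x d := by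
    intro t ht
    apply ciSup_le
    intro i
    have h1 : ⟪gradient (g i) x, t • d⟫ = t * ⟪gradient (g i) x, d⟫ :=
      real_inner_smul_right _ _ _
    have h2 : ⟪t • d, B i x (t • d)⟫ = t ^ 2 * ⟪d, B i x d⟫ := by
      rw [(B i x).map_smul, real_inner_smul_left, real_inner_smul_right]; ring
    have h3 : h i (x + t • d) - h i x ≤ t * (h i (x + d) - h i x) := by
      have hxe : x + t • d = (1 - t) • x + t • (x + d) := by
        rw [smul_add, sub_smul, one_smul]; abel
      have hcx := (hh i).2 (mem_univ x) (mem_univ (x + d))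
        (show (0:ℝ) ≤ 1 - t by linarith [ht.2]) ht.1.le
        (show (1 - t) + t = 1 by ring)
      rw [← hxe] at hcx
      simp only [smul_eq_mul] at hcx
      nlinarith
    have h4 : t ^ 2 * ⟪d, B i x d⟫ ≤ t * ⟪d, B i x d⟫ := by
      have ht2 : t ^ 2 ≤ t := by nlinarith [ht.1, ht.2]
      exact mul_le_mul_of_nonneg_right ht2 (hBnn i)
    have h5 := term_le_theta g h B x d i
    have h6 := mul_le_mul_of_nonneg_left h5 ht.1.le
    rw [h1, h2]
    linarith
  -- phi comparison
  have hkey : ∀ t : ℝ, t ∈ Ioo (0:ℝ) 1 →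
      theta g h B x d + ω * ‖d‖ ^ 2 ≤ (ω / 2) * (1 - t) * ‖d‖ ^ 2 := by
    intro t ht
    have hp := hmin x (t • d)
    rw [phi, phi, ← hd] at hp
    have hn : ‖t • d‖ ^ 2 = t ^ 2 * ‖d‖ ^ 2 := by
      rw [norm_smul]; rw [Real.norm_eq_abs, mul_pow, sq_abs]
    rw [hn] at hp
    have := hconv t ht
    have h1t : 0 < 1 - t := by linarith [ht.2]
    nlinarith [sq_nonneg ‖d‖]
  have htend : Tendsto (fun t : ℝ => (ω / 2) * (1 - t) * ‖d‖ ^ 2) (𝓝[<] (1:ℝ)) (𝓝 0) := by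
    have : Tendsto (fun t : ℝ => (ω / 2) * (1 - t) * ‖d‖ ^ 2) (𝓝 (1:ℝ))
        (𝓝 ((ω / 2) * (1 - 1) * ‖d‖ ^ 2)) :=
      (Continuous.tendsto (by fun_prop) 1)
    simpa using this.mono_left nhdsWithin_le_nhds
  have hev : ∀ᶠ t in 𝓝[<] (1:ℝ), theta g h B x d + ω * ‖d‖ ^ 2 ≤
      (ω / 2) * (1 - t) * ‖d‖ ^ 2 := by
    filter_upwards [Ioo_mem_nhdsLT_of_mem (by simp : (1:ℝ) ∈ Ioc (0:ℝ) 1)] with t ht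
    exact hkey t ht
  have := ge_of_tendsto htend hev
  linarith


lemma decrease_lemma [Nonempty (Fin m)]
    (hg : ∀ i, ContDiff ℝ 2 (g i))
    (hh : ∀ i, ConvexOn ℝ Set.univ (h i))
    (hBpos : ∀ i x (d : Euc n), d ≠ 0 → 0 < ⟪d, B i x d⟫)
    (L : NNReal) (hL : ∀ i, LipschitzWith L (gradient (g i)))
    (ω : ℝ) (hωpos : 0 < ω) (dω : Euc n → Euc n)
    (hmin : ∀ y d, phi g h B ω y (dω y) ≤ phi g h B ω y d)
    (y : Euc n) (i : Fin m) :
    g i (y + dω y) + h i (y + dω y) + (ω - (L : ℝ) / 2) * ‖dω y‖ ^ 2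
      ≤ g i y + h i y := by
  have hdesc := descent_lemma (hg i) (hL i) y (dω y)
  have hterm := term_le_theta g h B y (dω y) i
  have hθ := theta_key g h B hh hBpos ω hωpos dω hmin y
  have hBnn : 0 ≤ ⟪dω y, B i y (dω y)⟫ := by
    rcases eq_or_ne (dω y) 0 with h0 | h0
    · simp [h0]
    · exact (hBpos i y (dω y) h0).le
  nlinarith

end Helpers


/-- for the method without line searches, ∑ ‖d^k‖² < ∞ and ‖d^k‖² → 0. -/
theorem no_line_search_summable
    {n m : ℕ} (g h : Fin m → Euc n → ℝ)
    (B : Fin m → Euc n → (Euc n →L[ℝ] Euc n))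
    (hm : 0 < m)
    (hg : ∀ i, ContDiff ℝ 2 (g i))
    (hsc : ∀ i, ∃ a : ℝ, 0 < a ∧ ∀ x y : Euc n,
      a * ‖x - y‖ ^ 2 ≤ ⟪gradient (g i) x - gradient (g i) y, x - y⟫)
    (hh : ∀ i, ConvexOn ℝ Set.univ (h i))
    (hBsymm : ∀ i x (u v : Euc n), ⟪B i x u, v⟫ = ⟪u, B i x v⟫)
    (hBpos : ∀ i x (d : Euc n), d ≠ 0 → 0 < ⟪d, B i x d⟫)
    (L : NNReal) (hL : ∀ i, LipschitzWith L (gradient (g i)))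
    (ω : ℝ) (hω : (L : ℝ) / 2 < ω)
    (dω : Euc n → Euc n)
    (hmin : ∀ y d, phi g h B ω y (dω y) ≤ phi g h B ω y d)
    (x : ℕ → Euc n)
    (hstep : ∀ k, x (k + 1) = x k + dω (x k))
    (hbdd : ∀ i, ∃ C : ℝ, ∀ k, C ≤ g i (x k) + h i (x k)) :
    Summable (fun k => ‖dω (x k)‖ ^ 2) ∧
      Filter.Tendsto (fun k => ‖dω (x k)‖ ^ 2) atTop (nhds 0) := by

  haveI : Nonempty (Fin m) := ⟨⟨0, hm⟩⟩
  set i₀ : Fin m := ⟨0, hm⟩ with hi0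
  have hωpos : 0 < ω := lt_of_le_of_lt (by positivity) hω
  set c : ℝ := ω - (L : ℝ) / 2 with hc
  have hcpos : 0 < c := by simp only [hc]; linarith
  set F : ℕ → ℝ := fun k => g i₀ (x k) + h i₀ (x k) with hF
  have hstep' : ∀ k, c * ‖dω (x k)‖ ^ 2 ≤ F k - F (k + 1) := by
    intro k
    have hdec := decrease_lemma g h B hg hh hBpos L hL ω hωpos dω hmin (x k) i₀
    have hFk1 : F (k + 1) = g i₀ (x k + dω (x k)) + h i₀ (x k + dω (x k)) := by
      simp only [hF]; rw [hstep k]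
    have hFk : F k = g i₀ (x k) + h i₀ (x k) := rfl
    rw [hFk1, hFk, hc]
    linarith
  obtain ⟨C, hC⟩ := hbdd i₀
  have hsum_le : ∀ N, ∑ k ∈ Finset.range N, ‖dω (x k)‖ ^ 2 ≤ (F 0 - C) / c := by
    intro N
    have h1 : ∑ k ∈ Finset.range N, c * ‖dω (x k)‖ ^ 2 ≤ F 0 - F N := by
      calc ∑ k ∈ Finset.range N, c * ‖dω (x k)‖ ^ 2
          ≤ ∑ k ∈ Finset.range N, (F k - F (k + 1)) :=
            Finset.sum_le_sum fun k _ => hstep' k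
        _ = F 0 - F N := Finset.sum_range_sub' F N
    have h2 : C ≤ F N := hC N
    have h3 : c * ∑ k ∈ Finset.range N, ‖dω (x k)‖ ^ 2 ≤ F 0 - C := by
      rw [Finset.mul_sum]; linarith
    rw [le_div_iff₀' hcpos]
    exact h3
  have hsummable : Summable (fun k => ‖dω (x k)‖ ^ 2) :=
    summable_of_sum_range_le (fun k => by positivity) hsum_le
  exact ⟨hsummable, hsummable.tendsto_atTop_zero⟩
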